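/- Let p be a prime, θ, q ∈ ℚ_p with 0 < |θ−1|_p < |q|_p < 1, and f(x) = ((θx + q − 1)/(x + θ + q − 2))³. Then the derivative of f at x = 1 has p-adic absolute value |f'(1)|_p = |3|_p · |θ−1|_p / |q|_p; in particular, if p ≠ 3 then |f'(1)|_p = |θ−1|_p/|q|_p < 1, so 1 is an attracting fixed point. -/

import Mathlib

/-- The norm of the derivative of the Potts–Bethe mapping at the fixed point `1`
equals `‖3‖ · ‖θ-1‖ / ‖q‖`; in particular for `p ≠ 3` it equals `‖θ-1‖/‖q‖ < 1`,
so `1` is an attracting fixed point. -/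
theorem pottsBethe_deriv_at_one (p : ℕ) [Fact p.Prime]
    (θ q : ℚ_[p]) (h1 : 0 < ‖θ - 1‖) (h2 : ‖θ - 1‖ < ‖q‖) (h3 : ‖q‖ < 1) :
    ‖deriv (fun x : ℚ_[p] => ((θ * x + q - 1) / (x + θ + q - 2)) ^ 3) 1‖
      = ‖(3 : ℚ_[p])‖ * ‖θ - 1‖ / ‖q‖ ∧
    (p ≠ 3 →
      ‖deriv (fun x : ℚ_[p] => ((θ * x + q - 1) / (x + θ + q - 2)) ^ 3) 1‖
        = ‖θ - 1‖ / ‖q‖ ∧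
      ‖deriv (fun x : ℚ_[p] => ((θ * x + q - 1) / (x + θ + q - 2)) ^ 3) 1‖ < 1) := by
  have hq0 : ‖q‖ ≠ 0 := (h1.trans h2).ne'
  -- ‖θ+q-1‖ = ‖q‖
  have hDval : (1 : ℚ_[p]) + θ + q - 2 = q + (θ - 1) := by ring
  have hDnorm : ‖(1 : ℚ_[p]) + θ + q - 2‖ = ‖q‖ := by
    rw [hDval]
    rcases eq_or_ne ‖q‖ ‖θ - 1‖ with h | h
    · exact absurd h.symm h2.ne
    · rw [Padic.add_eq_max_of_ne h, max_eq_left h2.le]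
  have hD0 : (1 : ℚ_[p]) + θ + q - 2 ≠ 0 := by
    intro h
    rw [h, norm_zero] at hDnorm
    exact hq0 hDnorm.symm
  set D : ℚ_[p] := 1 + θ + q - 2 with hD
  have hN : θ * 1 + q - 1 = D := by rw [hD]; ring
  -- derivative computation
  have hnum : HasDerivAt (fun x : ℚ_[p] => θ * x + q - 1) θ 1 := by
    simpa using (((hasDerivAt_id (1:ℚ_[p])).const_mul θ).add_const q).sub_const 1
  have hden : HasDerivAt (fun x : ℚ_[p] => x + θ + q - 2) 1 1 := by
    simpa using ((((hasDerivAt_id (1:ℚ_[p])).add_const θ).add_const q).sub_const 2)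
  have hg : HasDerivAt (fun x : ℚ_[p] => (θ * x + q - 1) / (x + θ + q - 2))
      ((θ * D - (θ * 1 + q - 1) * 1) / D ^ 2) 1 := by
    exact hnum.div hden hD0
  have hf : HasDerivAt (fun x : ℚ_[p] => ((θ * x + q - 1) / (x + θ + q - 2)) ^ 3)
      (3 * ((θ * 1 + q - 1) / (1 + θ + q - 2)) ^ (3 - 1)
        * ((θ * D - (θ * 1 + q - 1) * 1) / D ^ 2)) 1 := by
    simpa using hg.fun_pow 3
  have hderiv : deriv (fun x : ℚ_[p] => ((θ * x + q - 1) / (x + θ + q - 2)) ^ 3) 1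
      = 3 * (θ - 1) / D := by
    rw [hf.deriv, hN]
    have : θ * D - D * 1 = (θ - 1) * D := by ring
    rw [this, ← hD]
    field_simp
    ring
  have hnorm : ‖(3 : ℚ_[p]) * (θ - 1) / D‖ = ‖(3 : ℚ_[p])‖ * ‖θ - 1‖ / ‖q‖ := by
    rw [norm_div, norm_mul, hDnorm]
  refine ⟨by rw [hderiv]; exact hnorm, fun hp => ?_⟩
  have h3norm : ‖(3 : ℚ_[p])‖ = 1 := by
    have hle : ‖((3 : ℤ) : ℚ_[p])‖ ≤ 1 := Padic.norm_int_le_one 3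
    have hnlt : ¬ ‖((3 : ℤ) : ℚ_[p])‖ < 1 := by
      rw [Padic.norm_intCast_lt_one_iff]
      intro hdvd
      have hpd : p ∣ 3 := Int.ofNat_dvd.mp (by exact_mod_cast hdvd)
      exact hp ((Nat.prime_dvd_prime_iff_eq Fact.out (by norm_num)).mp hpd)
    have : ‖((3 : ℤ) : ℚ_[p])‖ = 1 := le_antisymm hle (not_lt.mp hnlt)
    simpa using this
  have hmain : ‖deriv (fun x : ℚ_[p] => ((θ * x + q - 1) / (x + θ + q - 2)) ^ 3) 1‖
      = ‖θ - 1‖ / ‖q‖ := by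
    rw [hderiv, hnorm, h3norm, one_mul]
  exact ⟨hmain, by rw [hmain]; exact (div_lt_one (h1.trans h2)).mpr h2⟩
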